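/- If v₀, v₁ satisfy the full steady-state mean BVP of the neurotransmitter model (the ODE system together with all four boundary conditions v₀'(0) = 0, v₁'(0) = 0, v₀(L) = 0, v₁'(L) = c·β/(α+β)), then for every x ∈ [0, L] one has v₀(x) + v₁(x) = (c·β/(α·γ))·cosh(γL)/sinh(γL). In particular the constant value of the steady-state mean concentration is (c·β/(α·γ))·coth(γL). -/

import Mathlib

/-- For the full steady-state mean BVP of the neurotransmitter model,
`v₀ + v₁` equals the constant `(c·β/(α·γ))·cosh(γL)/sinh(γL)` on `[0, L]`. -/
theorem neurotransmitter_mean_constant_value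
    (L D α β c γ : ℝ) (hL : 0 < L) (hD : 0 < D) (hα : 0 < α) (hβ : 0 < β) (hc : 0 < c)
    (hγ : γ = Real.sqrt ((α + β) / D))
    (v₀ v₁ : ℝ → ℝ) (a b : ℝ) (ha : a < 0) (hb : L < b)
    (hreg0 : ContDiffOn ℝ 2 v₀ (Set.Ioo a b))
    (hreg1 : ContDiffOn ℝ 2 v₁ (Set.Ioo a b))
    (hode0 : ∀ x ∈ Set.Icc (0:ℝ) L, D * deriv (deriv v₀) x = β * v₀ x - α * v₁ x)
    (hode1 : ∀ x ∈ Set.Icc (0:ℝ) L, D * deriv (deriv v₁) x = α * v₁ x - β * v₀ x)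
    (hbc0 : deriv v₀ 0 = 0) (hbc1 : deriv v₁ 0 = 0)
    (hbc2 : v₀ L = 0) (hbc3 : deriv v₁ L = c * β / (α + β)) :
    ∀ x ∈ Set.Icc (0:ℝ) L,
      v₀ x + v₁ x = (c * β / (α * γ)) * Real.cosh (γ * L) / Real.sinh (γ * L) := by
  have hαβ : 0 < α + β := by linarith
  have hγ2 : γ ^ 2 = (α + β) / D := by
    rw [hγ, Real.sq_sqrt (by positivity)]
  have hγpos : 0 < γ := by
    rw [hγ]; exact Real.sqrt_pos.2 (by positivity)
  have hsinh : 0 < Real.sinh (γ * L) := Real.sinh_pos_iff.2 (by positivity)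
  have hsub : Set.Icc (0:ℝ) L ⊆ Set.Ioo a b := fun x hx =>
    ⟨lt_of_lt_of_le ha hx.1, lt_of_le_of_lt hx.2 hb⟩
  have hnhds : ∀ x ∈ Set.Icc (0:ℝ) L, Set.Ioo a b ∈ nhds x := fun x hx =>
    isOpen_Ioo.mem_nhds (hsub hx)
  -- first derivatives
  have hd0 : ∀ x ∈ Set.Icc (0:ℝ) L, HasDerivAt v₀ (deriv v₀ x) x := fun x hx =>
    ((hreg0.differentiableOn (by norm_num)).differentiableAt (hnhds x hx)).hasDerivAt
  have hd1 : ∀ x ∈ Set.Icc (0:ℝ) L, HasDerivAt v₁ (deriv v₁ x) x := fun x hx =>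
    ((hreg1.differentiableOn (by norm_num)).differentiableAt (hnhds x hx)).hasDerivAt
  -- second derivatives
  have hreg0' := hreg0.deriv_of_isOpen isOpen_Ioo (m := 1) (by norm_num)
  have hreg1' := hreg1.deriv_of_isOpen isOpen_Ioo (m := 1) (by norm_num)
  have hd0' : ∀ x ∈ Set.Icc (0:ℝ) L, HasDerivAt (deriv v₀) (deriv (deriv v₀) x) x :=
    fun x hx =>
    ((hreg0'.differentiableOn (by norm_num)).differentiableAt (hnhds x hx)).hasDerivAt
  have hd1' : ∀ x ∈ Set.Icc (0:ℝ) L, HasDerivAt (deriv v₁) (deriv (deriv v₁) x) x :=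
    fun x hx =>
    ((hreg1'.differentiableOn (by norm_num)).differentiableAt (hnhds x hx)).hasDerivAt
  have hDne : D ≠ 0 := ne_of_gt hD
  -- Step 1: deriv v₀ + deriv v₁ is constant zero on Icc
  have hsum' : ∀ x ∈ Set.Icc (0:ℝ) L, deriv v₀ x + deriv v₁ x = 0 := by
    have key : ∀ x ∈ Set.Icc (0:ℝ) L,
        HasDerivAt (fun y => deriv v₀ y + deriv v₁ y) 0 x := by
      intro x hx
      have h := (hd0' x hx).add (hd1' x hx)
      have hz : deriv (deriv v₀) x + deriv (deriv v₁) x = 0 := by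
        have h0 := hode0 x hx; have h1 := hode1 x hx
        have : D * (deriv (deriv v₀) x + deriv (deriv v₁) x) = 0 := by ring_nf; linarith
        exact (mul_eq_zero.mp this).resolve_left hDne
      rwa [hz] at h
    have hconst := constant_of_has_deriv_right_zero
      (f := fun y => deriv v₀ y + deriv v₁ y) (a := 0) (b := L)
      (fun x hx => ((key x hx).continuousAt).continuousWithinAt)
      (fun x hx => ((key x (Set.mem_Icc_of_Ico hx)).hasDerivWithinAt))
    intro x hx
    have := hconst x hx
    simpa [hbc0, hbc1] using this
  -- Step 2: v₀ + v₁ is constant on Icc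
  have hsumconst : ∀ x ∈ Set.Icc (0:ℝ) L, v₀ x + v₁ x = v₀ 0 + v₁ 0 := by
    have key : ∀ x ∈ Set.Icc (0:ℝ) L, HasDerivAt (fun y => v₀ y + v₁ y) 0 x := by
      intro x hx
      have h := (hd0 x hx).add (hd1 x hx)
      rwa [hsum' x hx] at h
    exact constant_of_has_deriv_right_zero
      (fun x hx => ((key x hx).continuousAt).continuousWithinAt)
      (fun x hx => ((key x (Set.mem_Icc_of_Ico hx)).hasDerivWithinAt))
  -- deriv v₀ at L
  have hd0L : deriv v₀ L = -(c * β / (α + β)) := by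
    have := hsum' L (Set.right_mem_Icc.2 hL.le)
    linarith [this, hbc3.symm ▸ this]
  -- Step 3: the invariant h(x) = u'(x) cosh(γx) - γ u(x) sinh(γx), u = β v₀ - α v₁
  set F : ℝ → ℝ := fun x =>
    (β * deriv v₀ x - α * deriv v₁ x) * Real.cosh (γ * x)
      - γ * (β * v₀ x - α * v₁ x) * Real.sinh (γ * x) with hF
  have keyF : ∀ x ∈ Set.Icc (0:ℝ) L, HasDerivAt F 0 x := by
    intro x hx
    have hcosh : HasDerivAt (fun y => Real.cosh (γ * y)) (γ * Real.sinh (γ * x)) x := by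
      have := (Real.hasDerivAt_cosh (γ * x)).comp x ((hasDerivAt_id x).const_mul γ)
      have h' : HasDerivAt (Real.cosh ∘ HMul.hMul γ) (γ * Real.sinh (γ * x)) x := by
        simpa [mul_comm] using this
      exact h'
    have hsinh' : HasDerivAt (fun y => Real.sinh (γ * y)) (γ * Real.cosh (γ * x)) x := by
      have := (Real.hasDerivAt_sinh (γ * x)).comp x ((hasDerivAt_id x).const_mul γ)
      have h' : HasDerivAt (Real.sinh ∘ HMul.hMul γ) (γ * Real.cosh (γ * x)) x := by
        simpa [mul_comm] using this
      exact h'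
    have h1 : HasDerivAt (fun y => β * deriv v₀ y - α * deriv v₁ y)
        (β * deriv (deriv v₀) x - α * deriv (deriv v₁) x) x :=
      ((hd0' x hx).const_mul β).sub ((hd1' x hx).const_mul α)
    have h2 : HasDerivAt (fun y => β * v₀ y - α * v₁ y)
        (β * deriv v₀ x - α * deriv v₁ x) x :=
      ((hd0 x hx).const_mul β).sub ((hd1 x hx).const_mul α)
    have hfull := ((h1.mul hcosh).sub (((h2.const_mul γ)).mul hsinh'))
    have hval : (β * deriv (deriv v₀) x - α * deriv (deriv v₁) x) * Real.cosh (γ * x)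
        + (β * deriv v₀ x - α * deriv v₁ x) * (γ * Real.sinh (γ * x))
        - (γ * (β * deriv v₀ x - α * deriv v₁ x) * Real.sinh (γ * x)
          + γ * (β * v₀ x - α * v₁ x) * (γ * Real.cosh (γ * x))) = 0 := by
      have h0 := hode0 x hx; have h1' := hode1 x hx
      have huu : β * deriv (deriv v₀) x - α * deriv (deriv v₁) x
          = γ ^ 2 * (β * v₀ x - α * v₁ x) := by
        rw [hγ2]
        field_simp
        nlinarith [h0, h1']
      rw [huu]; ring
    rw [hF]
    exact hfull.congr_deriv (by linarith [hval])
  have hF0 : F 0 = 0 := by simp [hF, hbc0, hbc1]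
  have hFconst := constant_of_has_deriv_right_zero
    (f := F) (a := 0) (b := L)
    (fun x hx => ((keyF x hx).continuousAt).continuousWithinAt)
    (fun x hx => ((keyF x (Set.mem_Icc_of_Ico hx)).hasDerivWithinAt))
  have hFL : F L = 0 := by rw [hFconst L (Set.right_mem_Icc.2 hL.le), hF0]
  -- extract v₁ L
  have hv1L : v₁ L = c * β * Real.cosh (γ * L) / (α * γ * Real.sinh (γ * L)) := by
    have : (β * (-(c * β / (α + β))) - α * (c * β / (α + β))) * Real.cosh (γ * L)
        - γ * (β * 0 - α * v₁ L) * Real.sinh (γ * L) = 0 := by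
      have h := hFL
      simp only [hF] at h
      rwa [hd0L, hbc3, hbc2] at h
    have hb' : β * (-(c * β / (α + β))) - α * (c * β / (α + β)) = -(c * β) := by
      field_simp; ring
    rw [hb'] at this
    field_simp at this ⊢
    nlinarith [this]
  intro x hx
  have h1 := hsumconst x hx
  have h2 := hsumconst L (Set.right_mem_Icc.2 hL.le)
  rw [h1, ← h2, hbc2, zero_add, hv1L]
  field_simp
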